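/- Let (G_n, f_n) be an inverse sequence of countable discrete abelian groups indexed by ℕ with all bonding maps f_n : G_{n+1} → G_n surjective, and suppose: the sequence does not stabilize, the set {n : ker(f_n) is infinite} is finite, and at least one kernel ker(f_n) is infinite. Then the inverse limit lim G_n is homeomorphic to ℕ × (ℕ → Bool), the product of the discrete space ℕ with the Cantor space; in particular lim G_n is locally compact but not compact. -/
import Mathlib

namespace CantorCode

/-- length of the maximal all-`true` prefix of `b` within the first `m` bits -/
def lead (b : ℕ → Bool) : ℕ → ℕ
  | 0 => 0
  | m + 1 => if lead b m = m ∧ b m then m + 1 else lead b m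

lemma lead_le (b : ℕ → Bool) (m : ℕ) : lead b m ≤ m := by
  induction m with
  | zero => simp [lead]
  | succ m ih =>
    rw [lead]
    split
    · exact le_refl _
    · exact Nat.le_succ_of_le ih

lemma lead_true (b : ℕ → Bool) (m : ℕ) : ∀ i < lead b m, b i = true := by
  induction m with
  | zero => simp [lead]
  | succ m ih =>
    rw [lead]
    split
    · rename_i h
      intro i hi
      by_cases him : i < m
      · exact ih i (by omega)
      · have : i = m := by omega
        exact this ▸ h.2
    · exact ih

lemma lead_false (b : ℕ → Bool) (m : ℕ) (h : lead b m < m) : b (lead b m) = false := by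
  induction m with
  | zero => omega
  | succ m ih =>
    rw [lead] at h ⊢
    split
    · rename_i hc
      rw [if_pos hc] at h
      omega
    · rename_i hcond
      by_cases hm : lead b m < m
      · exact ih hm
      · have hm' : lead b m = m := le_antisymm (lead_le b m) (by omega)
        rw [hm']
        cases hbm : b m
        · rfl
        · exact absurd ⟨hm', hbm⟩ hcond

lemma lead_eq (b : ℕ → Bool) (m t : ℕ) (h1 : t ≤ m) (h2 : ∀ i < t, b i = true)
    (h3 : t = m ∨ b t = false) : lead b m = t := by
  rcases Nat.lt_trichotomy (lead b m) t with h | h | h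
  · have hf := lead_false b m (lt_of_lt_of_le h h1)
    have ht := h2 _ h
    rw [ht] at hf; exact absurd hf (by simp)
  · exact h
  · have hbt := lead_true b m t h
    rcases h3 with h3 | h3
    · have := lead_le b m; omega
    · rw [h3] at hbt; exact absurd hbt (by simp)

def dgt (k0 : ℕ) (b : ℕ → Bool) : ℕ := lead b (k0 - 1)

def csm (k0 : ℕ) (b : ℕ → Bool) : ℕ := if dgt k0 b = k0 - 1 then dgt k0 b else dgt k0 b + 1

def cdrop (j : ℕ) (b : ℕ → Bool) : ℕ → Bool := fun i => b (j + i)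

def off (k : ℕ → ℕ) (b : ℕ → Bool) : ℕ → ℕ
  | 0 => 0
  | n + 1 => off k b n + csm (k n) (cdrop (off k b n) b)

def digit (k : ℕ → ℕ) (b : ℕ → Bool) (n : ℕ) : ℕ := dgt (k n) (cdrop (off k b n) b)

def len (k x : ℕ → ℕ) (n : ℕ) : ℕ := if x n = k n - 1 then x n else x n + 1

def pos (k x : ℕ → ℕ) : ℕ → ℕ
  | 0 => 0
  | n + 1 => pos k x n + len k x n

def idx (k x : ℕ → ℕ) (m : ℕ) : ℕ := Nat.findGreatest (fun n => pos k x n ≤ m) m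

def E (k x : ℕ → ℕ) (m : ℕ) : Bool := decide (m - pos k x (idx k x m) < x (idx k x m))

lemma digit_lt {k : ℕ → ℕ} (hk : ∀ n, 2 ≤ k n) (b : ℕ → Bool) (n : ℕ) :
    digit k b n < k n := by
  have h1 := hk n
  have := lead_le (cdrop (off k b n) b) (k n - 1)
  unfold digit dgt
  omega

lemma len_pos {k x : ℕ → ℕ} (hk : ∀ n, 2 ≤ k n) (n : ℕ) : 1 ≤ len k x n := by
  have := hk n; unfold len; split <;> omega

lemma x_le_len {k x : ℕ → ℕ} (n : ℕ) : x n ≤ len k x n := by unfold len; split <;> omega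

lemma pos_ge_self {k x : ℕ → ℕ} (hk : ∀ n, 2 ≤ k n) (n : ℕ) : n ≤ pos k x n := by
  induction n with
  | zero => simp [pos]
  | succ n ih => have := len_pos (x := x) hk n; rw [pos]; omega

lemma pos_mono {k x : ℕ → ℕ} {a b : ℕ} (h : a ≤ b) : pos k x a ≤ pos k x b := by
  induction b, h using Nat.le_induction with
  | base => exact le_refl _
  | succ b hb ih => rw [pos]; have := ih; omega

lemma idx_spec1 {k x : ℕ → ℕ} (m : ℕ) : pos k x (idx k x m) ≤ m :=
  Nat.findGreatest_spec (P := fun n => pos k x n ≤ m) (Nat.zero_le m) (by show pos k x 0 ≤ m; rw [pos]; omega)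

lemma idx_le {k x : ℕ → ℕ} (m : ℕ) : idx k x m ≤ m := Nat.findGreatest_le m

lemma idx_lt {k x : ℕ → ℕ} (hk : ∀ n, 2 ≤ k n) (m : ℕ) : m < pos k x (idx k x m + 1) := by
  by_contra hcon
  push_neg at hcon
  have h1 : idx k x m + 1 ≤ pos k x (idx k x m + 1) := pos_ge_self hk _
  exact Nat.findGreatest_is_greatest (P := fun n => pos k x n ≤ m)
    (k := idx k x m + 1) (n := m) (Nat.lt_succ_self _) (by omega) hcon

lemma idx_eq {k x : ℕ → ℕ} (hk : ∀ n, 2 ≤ k n) {m n : ℕ}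
    (h1 : pos k x n ≤ m) (h2 : m < pos k x (n + 1)) : idx k x m = n := by
  rcases Nat.lt_trichotomy (idx k x m) n with h | h | h
  · have hmono := pos_mono (k := k) (x := x) (show idx k x m + 1 ≤ n from h)
    have := idx_lt (x := x) hk m
    omega
  · exact h
  · have hmono := pos_mono (k := k) (x := x) (show n + 1 ≤ idx k x m from h)
    have := idx_spec1 (k := k) (x := x) m
    omega

lemma bitval {k x : ℕ → ℕ} (hk : ∀ n, 2 ≤ k n) (n j : ℕ) (hj : j < len k x n) :
    E k x (pos k x n + j) = decide (j < x n) := by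
  have hidx : idx k x (pos k x n + j) = n :=
    idx_eq hk (Nat.le_add_right _ _) (by rw [pos]; omega)
  rw [E, hidx, Nat.add_sub_cancel_left]

lemma dgt_at {k x : ℕ → ℕ} (hk : ∀ n, 2 ≤ k n) (hx : ∀ n, x n < k n) (n : ℕ) :
    dgt (k n) (cdrop (pos k x n) (E k x)) = x n := by
  unfold dgt
  apply lead_eq
  · have := hk n; have := hx n; omega
  · intro i hi
    show E k x (pos k x n + i) = true
    rw [bitval hk n i (lt_of_lt_of_le hi (x_le_len n))]
    simpa using hi
  · by_cases hcase : x n = k n - 1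
    · exact Or.inl hcase
    · refine Or.inr ?_
      show E k x (pos k x n + x n) = false
      rw [bitval hk n (x n) (by unfold len; rw [if_neg hcase]; omega)]
      simp

lemma csm_at {k x : ℕ → ℕ} (hk : ∀ n, 2 ≤ k n) (hx : ∀ n, x n < k n) (n : ℕ) :
    csm (k n) (cdrop (pos k x n) (E k x)) = len k x n := by
  unfold csm len
  rw [dgt_at hk hx]

lemma off_eq {k x : ℕ → ℕ} (hk : ∀ n, 2 ≤ k n) (hx : ∀ n, x n < k n) :
    ∀ n, off k (E k x) n = pos k x n := by
  intro n
  induction n with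
  | zero => rfl
  | succ n ih => rw [off, pos, ih, csm_at hk hx]

/-- Lemma A : decoding the encoding recovers the digits. -/
lemma digit_E {k x : ℕ → ℕ} (hk : ∀ n, 2 ≤ k n) (hx : ∀ n, x n < k n) (n : ℕ) :
    digit k (E k x) n = x n := by
  rw [digit, off_eq hk hx, dgt_at hk hx]

/-- Lemma B : encoding the decoded digit sequence recovers the bits. -/
lemma E_digit {k : ℕ → ℕ} (hk : ∀ n, 2 ≤ k n) (b : ℕ → Bool) :
    E k (digit k b) = b := by
  set x : ℕ → ℕ := digit k b with hxdef
  have hx : ∀ n, x n < k n := fun n => digit_lt hk b n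
  have hlen : ∀ n, len k x n = csm (k n) (cdrop (off k b n) b) := by
    intro n
    have hdg : dgt (k n) (cdrop (off k b n) b) = x n := rfl
    unfold len csm
    rw [hdg]
  have hpos : ∀ n, pos k x n = off k b n := by
    intro n
    induction n with
    | zero => rfl
    | succ n ih => rw [pos, off, ih, hlen]
  funext m
  set n := idx k x m with hndef
  have h1 : pos k x n ≤ m := idx_spec1 m
  have h2 : m < pos k x (n + 1) := idx_lt hk m
  rw [pos] at h2
  set j := m - pos k x n with hjdef
  have hm : m = pos k x n + j := by omega
  have hEm : E k x m = decide (j < x n) := by rw [E, ← hndef, ← hjdef]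
  have hbm : b m = cdrop (off k b n) b j := by
    show b m = b (off k b n + j)
    rw [← hpos, ← hm]
  by_cases hcase : j < x n
  · rw [hEm, hbm, decide_eq_true hcase]
    exact (lead_true (cdrop (off k b n) b) (k n - 1) j hcase).symm
  · have hne : x n ≠ k n - 1 := by
      intro heq
      rw [len, if_pos heq] at h2
      omega
    have hlenn : len k x n = x n + 1 := by rw [len, if_neg hne]
    have hj : j = x n := by rw [hlenn] at h2; omega
    have hlt : lead (cdrop (off k b n) b) (k n - 1) < k n - 1 := by
      show x n < k n - 1
      have := hx n
      omega
    have hfalse : cdrop (off k b n) b (x n) = false := lead_false _ _ hlt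
    rw [hEm, hbm, hj, hfalse]
    simp

lemma pos_congr {k x y : ℕ → ℕ} {n : ℕ} (h : ∀ i < n, x i = y i) :
    pos k x n = pos k y n := by
  induction n with
  | zero => rfl
  | succ n ih =>
    rw [pos, pos, ih (fun i hi => h i (Nat.lt_succ_of_lt hi))]
    congr 1
    rw [len, len, h n (Nat.lt_succ_self n)]

lemma fg_congr (P Q : ℕ → Prop) [DecidablePred P] [DecidablePred Q] (b : ℕ)
    (h : ∀ n ≤ b, (P n ↔ Q n)) : Nat.findGreatest P b = Nat.findGreatest Q b := by
  induction b with
  | zero => rfl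
  | succ b ih =>
    rw [Nat.findGreatest_succ, Nat.findGreatest_succ]
    by_cases hp : P (b + 1)
    · rw [if_pos hp, if_pos ((h _ le_rfl).mp hp)]
    · rw [if_neg hp, if_neg (fun hq => hp ((h _ le_rfl).mpr hq)),
        ih (fun n hn => h n (Nat.le_succ_of_le hn))]

lemma E_congr {k x y : ℕ → ℕ} {m : ℕ} (h : ∀ i ≤ m, x i = y i) :
    E k x m = E k y m := by
  have hpos : ∀ n, n ≤ m → pos k x n = pos k y n := fun n hn =>
    pos_congr (fun i hi => h i (by omega))
  have hidx : idx k x m = idx k y m := by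
    unfold idx
    exact fg_congr _ _ m (fun n hn => by rw [hpos n hn])
  rw [E, E, hidx, hpos _ (hidx ▸ idx_le m), h _ (hidx ▸ idx_le m)]

end CantorCode
universe u

open CantorCode in
lemma pi_cantor_core (K : ℕ → Type u) [∀ n, TopologicalSpace (K n)]
    [∀ n, DiscreteTopology (K n)] [∀ n, Finite (K n)] (hnt : ∀ n, Nontrivial (K n)) :
    Nonempty ((∀ n, K n) ≃ₜ (ℕ → Bool)) := by
  set k : ℕ → ℕ := fun n => Nat.card (K n) with hkdef
  have hk : ∀ n, 2 ≤ k n := fun n => Finite.one_lt_card_iff_nontrivial.mpr (hnt n)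
  let en : ∀ n, K n ≃ Fin (k n) := fun n => Finite.equivFin (K n)
  let θ : (∀ n, K n) → (ℕ → ℕ) := fun v n => (en n (v n) : ℕ)
  have hθ : ∀ v n, θ v n < k n := fun v n => (en n (v n)).isLt
  let eqv : (∀ n, K n) ≃ (ℕ → Bool) :=
  { toFun := fun v => E k (θ v)
    invFun := fun b n => (en n).symm ⟨digit k b n, digit_lt hk b n⟩
    left_inv := by
      intro v
      funext n
      have h1 : digit k (E k (θ v)) n = θ v n := digit_E hk (hθ v) n
      have h2 : (⟨digit k (E k (θ v)) n, digit_lt hk _ n⟩ : Fin (k n)) = en n (v n) :=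
        Fin.ext h1
      show (en n).symm ⟨digit k (E k (θ v)) n, digit_lt hk _ n⟩ = v n
      rw [h2, Equiv.symm_apply_apply]
    right_inv := by
      intro b
      have hd : θ (fun n => (en n).symm ⟨digit k b n, digit_lt hk b n⟩) = digit k b := by
        funext n
        show ((en n) ((en n).symm ⟨digit k b n, digit_lt hk b n⟩) : ℕ) = digit k b n
        rw [Equiv.apply_symm_apply]
      show E k (θ _) = b
      rw [hd, E_digit hk] }
  have hcont : Continuous (eqv : (∀ n, K n) → (ℕ → Bool)) := by
    apply continuous_pi
    intro m
    let proj : (∀ n, K n) → (∀ i : Fin (m + 1), K i) := fun v i => v i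
    have hproj : Continuous proj := continuous_pi (fun i => continuous_apply _)
    let g : (∀ i : Fin (m + 1), K i) → Bool := fun w =>
      E k (fun i => if h : i < m + 1 then (en i (w ⟨i, h⟩) : ℕ) else 0) m
    have hfac : (fun v => eqv v m) = g ∘ proj := by
      funext v
      exact E_congr (fun i hi => by
        rw [dif_pos (show i < m + 1 by omega)])
    rw [hfac]
    exact continuous_of_discreteTopology.comp hproj
  exact ⟨Continuous.homeoOfEquivCompactToT2 (f := eqv) hcont⟩

lemma pi_cantor (K : ℕ → Type u) [∀ n, TopologicalSpace (K n)] [∀ n, DiscreteTopology (K n)]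
    [∀ n, Finite (K n)] [∀ n, Nonempty (K n)] (h : {n | Nontrivial (K n)}.Infinite) :
    Nonempty ((∀ n, K n) ≃ₜ (ℕ → Bool)) := by
  classical
  haveI : Infinite {n | Nontrivial (K n)} := h.to_subtype
  obtain ⟨e⟩ : Nonempty (ℕ ≃ {n | Nontrivial (K n)}) := nonempty_equiv_of_countable
  haveI : ∀ (s : {x // ¬ x ∈ {n | Nontrivial (K n)}}), Unique (K s) := fun s => by
    haveI : Subsingleton (K s) := not_nontrivial_iff_subsingleton.mp s.2
    exact uniqueOfSubsingleton (Classical.arbitrary _)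
  obtain ⟨e2⟩ := pi_cantor_core (fun n => K (e n)) (fun n => (e n).2)
  refine ⟨(Homeomorph.piEquivPiSubtypeProd (fun n => n ∈ {n | Nontrivial (K n)}) K).trans
    ((Homeomorph.prodCongr (((Homeomorph.piCongrLeft
        (Y := fun s : {n | Nontrivial (K n)} => K s) e).symm).trans e2)
      (Homeomorph.homeomorphOfUnique _ PUnit.{1})).trans (Homeomorph.prodPUnit _))⟩
section Chain

variable {G : ℕ → Type u} [∀ n, AddCommGroup (G n)] (f : ∀ n, G (n + 1) →+ G n)

/-- Composite bonding map `G m →+ G n` for `n ≤ m`. -/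
def chain (n : ℕ) : ∀ {m : ℕ}, n ≤ m → (G m →+ G n) :=
  fun h => Nat.leRecOn h (fun {k} φ => φ.comp (f k)) (AddMonoidHom.id (G n))

lemma chain_self (n : ℕ) (h : n ≤ n) (z : G n) : chain f n h z = z := by
  unfold chain
  rw [Nat.leRecOn_self]
  rfl

lemma chain_succ {n m : ℕ} (h1 : n ≤ m) (h2 : n ≤ m + 1) (z : G (m + 1)) :
    chain f n h2 z = chain f n h1 (f m z) := by
  unfold chain
  rw [Nat.leRecOn_succ h1]
  rfl

lemma chain_step (n : ℕ) : ∀ m (h : n + 1 ≤ m) (h2 : n ≤ m) (z : G m),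
    chain f n h2 z = f n (chain f (n + 1) h z) := by
  intro m h
  induction m, h using Nat.le_induction with
  | base =>
    intro h2 z
    rw [chain_succ f (le_refl n) h2, chain_self, chain_self]
  | succ m hm ih =>
    intro h2 z
    rw [chain_succ f (show n ≤ m by omega) h2, ih (show n ≤ m by omega) (f m z),
      chain_succ f hm]

lemma chain_surj (hsurj : ∀ n, Function.Surjective (f n)) (n : ℕ) :
    ∀ m (h : n ≤ m), Function.Surjective (chain f n h) := by
  intro m h
  induction m, h using Nat.le_induction with
  | base =>
    intro z; exact ⟨z, chain_self f n _ z⟩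
  | succ m hm ih =>
    intro z
    obtain ⟨w, hw⟩ := ih z
    obtain ⟨w', hw'⟩ := hsurj m w
    exact ⟨w', by rw [chain_succ f hm, hw', hw]⟩

lemma chain_coherent {x : ∀ n, G n} (hx : ∀ n, x n = f n (x (n + 1))) (n : ℕ) :
    ∀ m (h : n ≤ m), x n = chain f n h (x m) := by
  intro m h
  induction m, h using Nat.le_induction with
  | base => rw [chain_self]
  | succ m hm ih =>
    rw [chain_succ f hm, ← hx m]
    exact ih

end Chain

/-- The inverse limit of an inverse sequence of abelian groups `(G n, f n)`, as the
`AddSubgroup` of coherent sequences in the product group `∀ n, G n`.  Each `G n` is viewed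
as a discrete topological group, and `invLim G f` carries the subspace topology from the
product topology. -/
def invLim (G : ℕ → Type*) [∀ n, AddCommGroup (G n)]
    (f : ∀ n, G (n + 1) →+ G n) : AddSubgroup (∀ n, G n) where
  carrier := {x | ∀ n, x n = f n (x (n + 1))}
  add_mem' := by
    intro a b ha hb n
    show a n + b n = f n (a (n + 1) + b (n + 1))
    rw [map_add, ← ha n, ← hb n]
  zero_mem' := by
    intro n
    show (0 : G n) = f n 0
    rw [map_zero]
  neg_mem' := by
    intro a ha n
    show -(a n) = f n (-(a (n + 1)))
    rw [map_neg, ← ha n]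


lemma invLim_structure_homeo (G : ℕ → Type u) [∀ n, AddCommGroup (G n)]
    [∀ n, TopologicalSpace (G n)] [∀ n, DiscreteTopology (G n)]
    (f : ∀ n, G (n + 1) →+ G n) (hsurj : ∀ n, Function.Surjective (f n)) (N : ℕ) :
    Nonempty ((invLim G f) ≃ₜ (G N × ∀ m : ℕ, (f (N + m)).ker)) := by
  classical
  set s : ∀ j, G j → G (j + 1) := fun j => Function.surjInv (hsurj j) with hsdef
  have hs : ∀ j (g : G j), f j (s j g) = g := fun j => Function.surjInv_eq (hsurj j)
  let u : G N → (∀ m, (f (N + m)).ker) → ∀ m, G (N + m) := fun g κ =>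
    Nat.rec g (fun m um => s (N + m) um + ((κ m : G (N + m + 1))))
  have husucc : ∀ g κ m, u g κ (m + 1) = s (N + m) (u g κ m) + (κ m : G (N + m + 1)) :=
    fun _ _ _ => rfl
  have hucoh : ∀ g κ m, f (N + m) (u g κ (m + 1)) = u g κ m := by
    intro g κ m
    rw [husucc, map_add, hs, AddMonoidHom.mem_ker.mp (κ m).2, add_zero]
  have huchain : ∀ g κ a b (hab : a ≤ b) (h : N + a ≤ N + b),
      chain f (N + a) h (u g κ b) = u g κ a := by
    intro g κ a b hab
    induction b, hab using Nat.le_induction with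
    | base => intro h; rw [chain_self]
    | succ b hb ih =>
      intro h
      show (chain f (N + a) (m := N + b + 1) h) (u g κ (b + 1)) = u g κ a
      rw [chain_succ f (show N + a ≤ N + b by omega), hucoh]
      exact ih _
  let Ψ : G N → (∀ m, (f (N + m)).ker) → ∀ n, G n := fun g κ n =>
    chain f n (Nat.le_add_left n N) (u g κ n)
  have hΨcoh : ∀ g κ n, Ψ g κ n = f n (Ψ g κ (n + 1)) := by
    intro g κ n
    show chain f n (Nat.le_add_left n N) (u g κ n)
      = f n (chain f (n + 1) (m := N + n + 1) (Nat.le_add_left (n + 1) N) (u g κ (n + 1)))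
    rw [← chain_step f n (N + n + 1) (by omega) (by omega) (u g κ (n + 1)),
      chain_succ f (Nat.le_add_left n N), hucoh]
  have hΨmem : ∀ g κ, Ψ g κ ∈ invLim G f := fun g κ n => hΨcoh g κ n
  have hΨat : ∀ g κ m, Ψ g κ (N + m) = u g κ m := by
    intro g κ m
    exact huchain g κ m (N + m) (by omega) _
  have hΨN : ∀ g κ, Ψ g κ N = g := fun g κ => hΨat g κ 0
  have hucongr : ∀ (g : G N) κ κ' (m : ℕ), (∀ i < m, κ i = κ' i) → u g κ m = u g κ' m := by
    intro g κ κ' m h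
    induction m with
    | zero => rfl
    | succ m ih =>
      rw [husucc, husucc, ih (fun i hi => h i (by omega)), h m (by omega)]
  let Φ : invLim G f → G N × ∀ m, (f (N + m)).ker := fun x =>
    ((x : ∀ n, G n) N, fun m => ⟨(x : ∀ n, G n) (N + m + 1) - s (N + m) ((x : ∀ n, G n) (N + m)), by
      have hx : ∀ n, (x : ∀ n, G n) n = f n ((x : ∀ n, G n) (n + 1)) := x.2
      rw [AddMonoidHom.mem_ker, map_sub, hs, ← hx (N + m), sub_self]⟩)
  let eqv : invLim G f ≃ (G N × ∀ m, (f (N + m)).ker) :=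
  { toFun := Φ
    invFun := fun p => ⟨Ψ p.1 p.2, hΨmem p.1 p.2⟩
    left_inv := by
      intro x
      have hx : ∀ n, (x : ∀ n, G n) n = f n ((x : ∀ n, G n) (n + 1)) := x.2
      apply Subtype.ext
      funext n
      have hux : ∀ m, u (Φ x).1 (Φ x).2 m = (x : ∀ n, G n) (N + m) := by
        intro m
        induction m with
        | zero => rfl
        | succ m ih =>
          rw [husucc, ih]
          show s (N + m) ((x : ∀ n, G n) (N + m))
              + ((x : ∀ n, G n) (N + m + 1) - s (N + m) ((x : ∀ n, G n) (N + m)))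
            = (x : ∀ n, G n) (N + m + 1)
          exact add_sub_cancel _ _
      show chain f n (Nat.le_add_left n N) (u (Φ x).1 (Φ x).2 n) = (x : ∀ n, G n) n
      rw [hux n]
      exact (chain_coherent f hx n (N + n) (Nat.le_add_left n N)).symm
    right_inv := by
      intro p
      refine Prod.ext (hΨN p.1 p.2) ?_
      funext m
      apply Subtype.ext
      have h1 : Ψ p.1 p.2 (N + m + 1) = u p.1 p.2 (m + 1) := hΨat p.1 p.2 (m + 1)
      show Ψ p.1 p.2 (N + m + 1) - s (N + m) (Ψ p.1 p.2 (N + m)) = (p.2 m : G (N + m + 1))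
      rw [h1, hΨat, husucc]
      abel }
  have hcontΦ : Continuous Φ := by
    apply Continuous.prodMk
    · exact (continuous_apply N).comp continuous_subtype_val
    · apply continuous_pi
      intro m
      apply Continuous.subtype_mk
      have hpair : Continuous (fun x : invLim G f =>
          ((x : ∀ n, G n) (N + m), (x : ∀ n, G n) (N + m + 1))) :=
        ((continuous_apply (N + m)).comp continuous_subtype_val).prodMk
          ((continuous_apply (N + m + 1)).comp continuous_subtype_val)
      exact (continuous_of_discreteTopology
        (f := fun pq : G (N + m) × G (N + m + 1) => pq.2 - s (N + m) pq.1)).comp hpair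
  have hcontΨ : Continuous (fun p : G N × ∀ m, (f (N + m)).ker =>
      (⟨Ψ p.1 p.2, hΨmem p.1 p.2⟩ : invLim G f)) := by
    apply Continuous.subtype_mk
    apply continuous_pi
    intro n
    let ρ : (G N × ∀ m, (f (N + m)).ker) → (G N × ∀ i : Fin n, (f (N + (i : ℕ))).ker) :=
      fun p => (p.1, fun i => p.2 i)
    have hρ : Continuous ρ := continuous_fst.prodMk
      (continuous_pi fun i => (continuous_apply ((i : ℕ))).comp continuous_snd)
    let g' : (G N × ∀ i : Fin n, (f (N + (i : ℕ))).ker) → G n := fun q =>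
      chain f n (Nat.le_add_left n N) (u q.1 (fun m => if h : m < n then q.2 ⟨m, h⟩ else 0) n)
    have hfac : (fun p : G N × ∀ m, (f (N + m)).ker => Ψ p.1 p.2 n) = g' ∘ ρ := by
      funext p
      show chain f n (Nat.le_add_left n N) (u p.1 p.2 n)
        = chain f n (Nat.le_add_left n N)
            (u p.1 (fun m => if h : m < n then p.2 m else 0) n)
      rw [hucongr p.1 p.2 (fun m => if h : m < n then p.2 m else 0) n
        (fun i hi => by
          show p.2 i = if h : i < n then p.2 i else 0
          rw [dif_pos hi])]
    show Continuous (fun p : G N × ∀ m, (f (N + m)).ker => Ψ p.1 p.2 n)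
    rw [hfac]
    exact continuous_of_discreteTopology.comp hρ
  exact ⟨{ toEquiv := eqv, continuous_toFun := hcontΦ, continuous_invFun := hcontΨ }⟩

/-- Let `(G n, f n)` be an inverse sequence of countable discrete abelian
groups indexed by `ℕ` with all bonding maps `f n : G (n+1) → G n` surjective, and suppose:
the sequence does not stabilize, the set `{n : ker (f n) is infinite}` is finite, and at least
one kernel `ker (f n)` is infinite.  Then the inverse limit `lim G n` is homeomorphic to
`ℕ × (ℕ → Bool)`, the product of the discrete space `ℕ` with the Cantor space; in particular
`lim G n` is locally compact but not compact. -/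
theorem invLim_homeomorph_nat_prod_cantor
    (G : ℕ → Type*) [∀ n, AddCommGroup (G n)] [∀ n, Countable (G n)]
    [∀ n, TopologicalSpace (G n)] [∀ n, DiscreteTopology (G n)]
    (f : ∀ n, G (n + 1) →+ G n)
    (hsurj : ∀ n, Function.Surjective (f n))
    (hns : ∀ N : ℕ, ∃ m, N ≤ m ∧ ¬Function.Bijective (f m))
    (hfin : {n : ℕ | Infinite (f n).ker}.Finite)
    (hone : ∃ n : ℕ, Infinite (f n).ker) :
    Nonempty (invLim G f ≃ₜ ℕ × (ℕ → Bool)) ∧ LocallyCompactSpace (invLim G f) ∧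
      ¬CompactSpace (invLim G f) := by
  classical
  obtain ⟨B, hB⟩ := hfin.bddAbove
  set N := B + 1 with hNdef
  have hNgt : ∀ n, Infinite (f n).ker → n < N := fun n hn => by
    have : n ≤ B := hB hn
    omega
  haveI hfinker : ∀ m, Finite ((f (N + m)).ker) := by
    intro m
    by_contra h
    rw [not_finite_iff_infinite] at h
    have := hNgt _ h
    omega
  -- `G N` is countably infinite
  obtain ⟨n0, hn0⟩ := hone
  haveI : Infinite ((f n0).ker) := hn0
  haveI : Infinite (G (n0 + 1)) := Infinite.of_injective (fun x : (f n0).ker => (x : G (n0 + 1))) Subtype.val_injective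
  have hn0N : n0 + 1 ≤ N := hNgt n0 hn0
  haveI : Infinite (G N) :=
    Infinite.of_surjective _ (chain_surj f hsurj (n0 + 1) N hn0N)
  -- infinitely many nontrivial kernels above `N`
  have hinf : {m : ℕ | Nontrivial ((f (N + m)).ker)}.Infinite := by
    intro hFin
    obtain ⟨C, hC⟩ := hFin.bddAbove
    obtain ⟨m, hm1, hm2⟩ := hns (N + C + 1)
    have hker : Nontrivial ((f m).ker) := by
      rw [AddSubgroup.nontrivial_iff_ne_bot]
      intro hbot
      exact hm2 ⟨(AddMonoidHom.ker_eq_bot_iff _).mp hbot, hsurj m⟩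
    have hmem : (m - N) ∈ {m : ℕ | Nontrivial ((f (N + m)).ker)} := by
      show Nontrivial ((f (N + (m - N))).ker)
      have hNm : N + (m - N) = m := by omega
      rw [hNm]
      exact hker
    have := hC hmem
    omega
  obtain ⟨h1⟩ := invLim_structure_homeo G f hsurj N
  obtain ⟨h2⟩ := pi_cantor (fun m => ((f (N + m)).ker : Type _)) hinf
  obtain ⟨eN⟩ : Nonempty (G N ≃ ℕ) := nonempty_equiv_of_countable
  let hN : G N ≃ₜ ℕ :=
    { toEquiv := eN
      continuous_toFun := continuous_of_discreteTopology
      continuous_invFun := continuous_of_discreteTopology }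
  let h : invLim G f ≃ₜ ℕ × (ℕ → Bool) := h1.trans (Homeomorph.prodCongr hN h2)
  refine ⟨⟨h⟩, (Homeomorph.locallyCompactSpace_iff h).mpr inferInstance, ?_⟩
  intro hc
  haveI := hc
  haveI : CompactSpace (ℕ × (ℕ → Bool)) := h.compactSpace
  haveI : CompactSpace ℕ := by
    constructor
    have hr : Set.range (Prod.fst : ℕ × (ℕ → Bool) → ℕ) = Set.univ :=
      Set.range_eq_univ.mpr Prod.fst_surjective
    rw [← hr]
    exact isCompact_range continuous_fst
  haveI : Finite ℕ := finite_of_compact_of_discrete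
  exact not_finite ℕ
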